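/- arXiv:1505.07262 — 2 statements merged into one kernel-verified Lean document; each statement's English description precedes it below -/
import Mathlib

section
/- Let α>0, let μ be a nonnegative Borel measure on ℂ, let q>0 and 0<p≤∞, and set D_{rqμ}(z) = (1+|z|)^q μ(D(z,r)). If D_{δqμ} belongs to L^p(ℂ, dm) for some δ>0, then D_{rqμ} belongs to L^p(ℂ, dm) for every r>0. -/
open MeasureTheory Filter Topology
open scoped ENNReal Classical

noncomputable section

/-- Membership in `L^p(ℂ, dm)` for an `ℝ≥0∞`-valued function, `0 < p ≤ ∞`:
for finite `p` the `p`-th power has finite integral, and for `p = ∞` the function is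
(essentially) bounded. -/
def MemLpENN (p : ℝ≥0∞) (F : ℂ → ℝ≥0∞) : Prop :=
  if p = ⊤ then essSup F volume < ⊤ else (∫⁻ z : ℂ, F z ^ p.toReal) < ⊤

/-- `z ↦ μ (ball z r)` is lower semicontinuous, hence measurable. -/
lemma measurable_meas_ball (μ : Measure ℂ) (r : ℝ) :
    Measurable fun z : ℂ => μ (Metric.ball z r) := by
  have lsc : LowerSemicontinuous fun z : ℂ => μ (Metric.ball z r) := by
    intro z y hy
    have hball : Metric.ball z r = ⋃ n : ℕ, Metric.ball z (r - 1 / (n + 1)) := by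
      ext x
      simp only [Metric.mem_ball, Set.mem_iUnion]
      constructor
      · intro hx
        obtain ⟨n, hn⟩ := exists_nat_one_div_lt (sub_pos.2 hx)
        exact ⟨n, by push_cast at hn ⊢; linarith⟩
      · rintro ⟨n, hn⟩
        have : (0:ℝ) < 1 / (n + 1) := by positivity
        linarith
    have hmono : Monotone fun n : ℕ => Metric.ball z (r - 1 / (n + 1)) := by
      intro m n hmn
      apply Metric.ball_subset_ball
      have h1 : (1:ℝ) / (n + 1) ≤ 1 / (m + 1) := by
        apply one_div_le_one_div_of_le (by positivity)
        exact_mod_cast add_le_add_left (Nat.cast_le.2 hmn) 1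
      linarith
    have hsup : μ (Metric.ball z r) = ⨆ n : ℕ, μ (Metric.ball z (r - 1 / (n + 1))) := by
      rw [hball]
      exact hmono.directed_le.measure_iUnion
    rw [show (fun z => μ (Metric.ball z r)) z > y ↔ y < μ (Metric.ball z r) from Iff.rfl, hsup] at hy
    obtain ⟨n, hn⟩ := lt_iSup_iff.1 hy
    have hε : (0:ℝ) < 1 / (n + 1) := by positivity
    filter_upwards [Metric.ball_mem_nhds z hε] with z' hz'
    refine hn.trans_le (measure_mono fun x hx => ?_)
    rw [Metric.mem_ball] at hx hz' ⊢
    calc dist x z' ≤ dist x z + dist z z' := dist_triangle x z z'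
      _ < (r - 1 / (n + 1)) + 1 / (n + 1) := by
          rw [dist_comm z z']; exact add_lt_add hx hz'
      _ = r := by ring
  exact lsc.measurable

private lemma memLpENN_mono {p : ℝ≥0∞} {F G : ℂ → ℝ≥0∞} (hFG : ∀ z, F z ≤ G z)
    (hG : MemLpENN p G) : MemLpENN p F := by
  unfold MemLpENN at hG ⊢
  split_ifs at hG ⊢ with htop
  · exact lt_of_le_of_lt (essSup_mono_ae (Eventually.of_forall hFG)) hG
  · refine lt_of_le_of_lt (lintegral_mono fun z => ?_) hG
    exact ENNReal.rpow_le_rpow (hFG z) ENNReal.toReal_nonneg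

private lemma memLpENN_add {p : ℝ≥0∞} {F G : ℂ → ℝ≥0∞}
    (hFm : Measurable F) (hF : MemLpENN p F) (hG : MemLpENN p G) :
    MemLpENN p fun z => F z + G z := by
  unfold MemLpENN at hF hG ⊢
  split_ifs at hF hG ⊢ with htop
  · have h1 : ∀ᵐ z ∂(volume : Measure ℂ), F z ≤ essSup F volume := ENNReal.ae_le_essSup F
    have h2 : ∀ᵐ z ∂(volume : Measure ℂ), G z ≤ essSup G volume := ENNReal.ae_le_essSup G
    have : essSup (fun z => F z + G z) volume ≤ essSup F volume + essSup G volume := by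
      refine essSup_le_of_ae_le _ ?_
      filter_upwards [h1, h2] with z hz1 hz2
      exact add_le_add hz1 hz2
    exact lt_of_le_of_lt this (ENNReal.add_lt_top.2 ⟨hF, hG⟩)
  · set s := p.toReal with hs
    have hs0 : 0 ≤ s := ENNReal.toReal_nonneg
    have key : ∀ z, (F z + G z) ^ s ≤ 2 ^ s * (F z ^ s + G z ^ s) := by
      intro z
      have h1 : F z + G z ≤ 2 * max (F z) (G z) := by
        rw [two_mul]
        exact add_le_add (le_max_left _ _) (le_max_right _ _)
      calc (F z + G z) ^ s ≤ (2 * max (F z) (G z)) ^ s := ENNReal.rpow_le_rpow h1 hs0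
        _ = 2 ^ s * max (F z) (G z) ^ s := ENNReal.mul_rpow_of_nonneg _ _ hs0
        _ ≤ 2 ^ s * (F z ^ s + G z ^ s) := by
            gcongr
            rcases le_total (F z) (G z) with hle | hle
            · rw [max_eq_right hle]; exact le_add_self
            · rw [max_eq_left hle]; exact self_le_add_right _ _
    calc (∫⁻ z : ℂ, (F z + G z) ^ s)
        ≤ ∫⁻ z : ℂ, 2 ^ s * (F z ^ s + G z ^ s) := lintegral_mono key
      _ = 2 ^ s * ∫⁻ z : ℂ, (F z ^ s + G z ^ s) :=
          lintegral_const_mul' _ _ (ENNReal.rpow_ne_top_of_nonneg hs0 ENNReal.ofNat_ne_top)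
      _ = 2 ^ s * ((∫⁻ z : ℂ, F z ^ s) + ∫⁻ z : ℂ, G z ^ s) := by
          rw [lintegral_add_left (hFm.pow_const s)]
      _ < ⊤ := ENNReal.mul_lt_top
          (ENNReal.rpow_lt_top_of_nonneg hs0 ENNReal.ofNat_ne_top)
          (ENNReal.add_lt_top.2 ⟨hF, hG⟩)

private lemma memLpENN_zero {p : ℝ≥0∞} (hp : 0 < p) : MemLpENN p (fun _ : ℂ => 0) := by
  unfold MemLpENN
  split_ifs with htop
  · simpa using (essSup_le_of_ae_le (0 : ℝ≥0∞)
      (Eventually.of_forall fun _ => le_rfl)).trans_lt ENNReal.zero_lt_top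
  · have hps : 0 < p.toReal := ENNReal.toReal_pos hp.ne' htop
    simp [ENNReal.zero_rpow_of_pos hps]

private lemma memLpENN_sum {p : ℝ≥0∞} (hp : 0 < p) {ι : Type*} (t : Finset ι)
    (f : ι → ℂ → ℝ≥0∞) (hmeas : ∀ i ∈ t, Measurable (f i))
    (hmem : ∀ i ∈ t, MemLpENN p (f i)) :
    MemLpENN p (fun z => ∑ i ∈ t, f i z) := by
  classical
  induction t using Finset.induction with
  | empty => simpa using memLpENN_zero hp
  | @insert a s ha ih =>
    have h1 : MemLpENN p fun z => f a z + ∑ i ∈ s, f i z :=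
      memLpENN_add (hmeas a (Finset.mem_insert_self a s))
        (hmem a (Finset.mem_insert_self a s))
        (ih (fun i hi => hmeas i (Finset.mem_insert_of_mem hi))
          (fun i hi => hmem i (Finset.mem_insert_of_mem hi)))
    refine memLpENN_mono (fun z => ?_) h1
    rw [Finset.sum_insert ha]

private lemma memLpENN_const_mul {p : ℝ≥0∞} {F : ℂ → ℝ≥0∞} (c : ℝ≥0∞) (hc : c ≠ ⊤)
    (hF : MemLpENN p F) : MemLpENN p fun z => c * F z := by
  unfold MemLpENN at hF ⊢
  split_ifs at hF ⊢ with htop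
  · rw [ENNReal.essSup_const_mul]
    exact ENNReal.mul_lt_top hc.lt_top hF
  · have hs0 : (0:ℝ) ≤ p.toReal := ENNReal.toReal_nonneg
    calc (∫⁻ z : ℂ, (c * F z) ^ p.toReal)
        = ∫⁻ z : ℂ, c ^ p.toReal * F z ^ p.toReal := by
          simp only [ENNReal.mul_rpow_of_nonneg _ _ hs0]
      _ = c ^ p.toReal * ∫⁻ z : ℂ, F z ^ p.toReal :=
          lintegral_const_mul' _ _ (ENNReal.rpow_ne_top_of_nonneg hs0 hc)
      _ < ⊤ := ENNReal.mul_lt_top (ENNReal.rpow_lt_top_of_nonneg hs0 hc) hF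

private lemma memLpENN_translate {p : ℝ≥0∞} {F : ℂ → ℝ≥0∞} (w : ℂ)
    (hF : MemLpENN p F) : MemLpENN p fun z => F (z + w) := by
  let e : ℂ ≃ᵐ ℂ := (Homeomorph.addRight w).toMeasurableEquiv
  have hmap : Measure.map e (volume : Measure ℂ) = volume := by
    have : (⇑e : ℂ → ℂ) = fun z => z + w := rfl
    rw [this]
    exact map_add_right_eq_self volume w
  unfold MemLpENN at hF ⊢
  split_ifs at hF ⊢ with htop
  · have := (e.measurableEmbedding).essSup_map_measure (g := F) (μ := (volume : Measure ℂ))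
    rw [hmap] at this
    rw [show (fun z : ℂ => F (z + w)) = F ∘ e from rfl, ← this]
    exact hF
  · have := MeasureTheory.lintegral_map_equiv (μ := (volume : Measure ℂ))
      (fun z : ℂ => F z ^ p.toReal) e
    rw [hmap] at this
    calc (∫⁻ z : ℂ, F (z + w) ^ p.toReal)
        = ∫⁻ z : ℂ, F (e z) ^ p.toReal := rfl
      _ = ∫⁻ z : ℂ, F z ^ p.toReal := this.symm
      _ < ⊤ := hF

set_option maxHeartbeats 1000000 in
theorem statement16 (α : ℝ) (hα : 0 < α) (μ : Measure ℂ) (q : ℝ) (hq : 0 < q)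
    (p : ℝ≥0∞) (hp : 0 < p) (δ : ℝ) (hδ : 0 < δ)
    (h : MemLpENN p fun z : ℂ => ENNReal.ofReal ((1 + ‖z‖) ^ q) * μ (Metric.ball z δ)) :
    ∀ r > 0, MemLpENN p fun z : ℂ => ENNReal.ofReal ((1 + ‖z‖) ^ q) * μ (Metric.ball z r) := by
  intro r hr
  obtain ⟨t, htmem, htcov⟩ := (isCompact_closedBall (0:ℂ) r).elim_nhds_subcover
    (fun w => Metric.ball w δ) (fun x _ => Metric.ball_mem_nhds x hδ)
  set C : ℝ≥0∞ := ENNReal.ofReal ((1 + r) ^ q) with hC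
  have key : ∀ z : ℂ, ENNReal.ofReal ((1 + ‖z‖) ^ q) * μ (Metric.ball z r)
      ≤ ∑ w ∈ t, C * (ENNReal.ofReal ((1 + ‖z + w‖) ^ q) * μ (Metric.ball (z + w) δ)) := by
    intro z
    have hcov : Metric.ball z r ⊆ ⋃ w ∈ t, Metric.ball (z + w) δ := by
      intro ζ hζ
      have h1 : ζ - z ∈ Metric.closedBall (0:ℂ) r := by
        rw [Metric.mem_closedBall, dist_zero_right]
        rw [Metric.mem_ball] at hζ
        calc ‖ζ - z‖ = dist ζ z := by rw [dist_eq_norm]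
          _ ≤ r := hζ.le
      obtain ⟨w, hw⟩ := Set.mem_iUnion₂.1 (htcov h1)
      refine Set.mem_iUnion₂.2 ⟨w, hw.1, ?_⟩
      rw [Metric.mem_ball, dist_eq_norm]
      have := hw.2
      rw [Metric.mem_ball, dist_eq_norm] at this
      calc ‖ζ - (z + w)‖ = ‖ζ - z - w‖ := by ring_nf
        _ < δ := this
    have hμ : μ (Metric.ball z r) ≤ ∑ w ∈ t, μ (Metric.ball (z + w) δ) :=
      (measure_mono hcov).trans (measure_biUnion_finset_le t _)
    calc ENNReal.ofReal ((1 + ‖z‖) ^ q) * μ (Metric.ball z r)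
        ≤ ENNReal.ofReal ((1 + ‖z‖) ^ q) * ∑ w ∈ t, μ (Metric.ball (z + w) δ) := by
          gcongr
      _ = ∑ w ∈ t, ENNReal.ofReal ((1 + ‖z‖) ^ q) * μ (Metric.ball (z + w) δ) :=
          Finset.mul_sum _ _ _
      _ ≤ ∑ w ∈ t, C * (ENNReal.ofReal ((1 + ‖z + w‖) ^ q) * μ (Metric.ball (z + w) δ)) := by
          refine Finset.sum_le_sum fun w hw => ?_
          rw [← mul_assoc]
          gcongr
          have hwr : ‖w‖ ≤ r := by
            have := htmem w hw
            rwa [Metric.mem_closedBall, dist_zero_right] at this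
          rw [hC, ← ENNReal.ofReal_mul (by positivity)]
          apply ENNReal.ofReal_le_ofReal
          rw [← Real.mul_rpow (by linarith) (by positivity)]
          apply Real.rpow_le_rpow (by positivity) ?_ hq.le
          have h1 : ‖z‖ ≤ ‖z + w‖ + ‖w‖ := by
            calc ‖z‖ = ‖z + w - w‖ := by ring_nf
              _ ≤ ‖z + w‖ + ‖w‖ := norm_sub_le _ _
          nlinarith [norm_nonneg (z + w), norm_nonneg w]
  refine memLpENN_mono key (memLpENN_sum hp t _ (fun w _ => ?_) (fun w _ => ?_))
  · refine measurable_const.mul (Measurable.mul ?_ ?_)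
    · have : Continuous fun z : ℂ => (1 + ‖z + w‖) ^ q := by
        apply Continuous.rpow_const
        · exact continuous_const.add ((continuous_id.add continuous_const).norm)
        · intro z; left; positivity
      exact (ENNReal.continuous_ofReal.comp this).measurable
    · exact (measurable_meas_ball μ δ).comp (measurable_add_const w)
  · exact memLpENN_const_mul C ENNReal.ofReal_ne_top
      (memLpENN_translate (F := fun z : ℂ => ENNReal.ofReal ((1 + ‖z‖) ^ q) * μ (Metric.ball z δ)) w h)
end
end

section
/- Let ψ be an entire function on ℂ satisfying limsup_{|z|→∞} (|ψ(z)| − |z|) ≤ 0. Then there exist complex numbers a and b with |a| ≤ 1 such that ψ(z) = a z + b for all z ∈ ℂ, and if |a| = 1 then b = 0. -/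
theorem statement19 (ψ : ℂ → ℂ) (hψ : Differentiable ℂ ψ)
    (h : ∀ ε > 0, ∃ R > 0, ∀ z : ℂ, R < ‖z‖ → ‖ψ z‖ ≤ ‖z‖ + ε) :
    ∃ a b : ℂ, ‖a‖ ≤ 1 ∧ (∀ z : ℂ, ψ z = a * z + b) ∧ (‖a‖ = 1 → b = 0) := by
  -- g = dslope ψ 0 is entire
  set g : ℂ → ℂ := dslope ψ 0 with hg
  have hgdiff : Differentiable ℂ g := by
    have : DifferentiableOn ℂ g Set.univ :=
      (Complex.differentiableOn_dslope (by simp)).mpr hψ.differentiableOn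
    exact fun z => (this z (Set.mem_univ z)).differentiableAt (by simp)
  obtain ⟨R, hR, hRb⟩ := h 1 one_pos
  set M := max R 1 with hM
  -- g bounded outside ball M
  have hout : ∀ z : ℂ, M < ‖z‖ → ‖g z‖ ≤ 2 + ‖ψ 0‖ := by
    intro z hz
    have hz0 : z ≠ 0 := by
      intro hz0; rw [hz0] at hz; simp at hz
      linarith [le_max_right R 1, hz]
    rw [hg, dslope_of_ne _ hz0, slope_def_field]
    have h1 : ‖ψ z - ψ 0‖ ≤ ‖z‖ + 1 + ‖ψ 0‖ := by
      calc ‖ψ z - ψ 0‖ ≤ ‖ψ z‖ + ‖ψ 0‖ := norm_sub_le _ _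
        _ ≤ ‖z‖ + 1 + ‖ψ 0‖ := by
          have := hRb z (lt_of_le_of_lt (le_max_left R 1) hz)
          linarith
    have hz1 : (1:ℝ) ≤ ‖z‖ := le_of_lt (lt_of_le_of_lt (le_max_right R 1) hz)
    rw [sub_zero, norm_div, div_le_iff₀ (by linarith)]
    nlinarith [norm_nonneg (ψ 0)]
  -- g bounded on closed ball
  obtain ⟨C, hC⟩ := (isCompact_closedBall (0:ℂ) M).exists_bound_of_continuousOn
    hgdiff.continuous.continuousOn
  have hbdd : Bornology.IsBounded (Set.range g) := by
    rw [isBounded_iff_forall_norm_le]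
    refine ⟨max C (2 + ‖ψ 0‖), ?_⟩
    rintro _ ⟨z, rfl⟩
    rcases le_or_gt ‖z‖ M with hle | hlt
    · exact le_trans (hC z (by simpa [Metric.mem_closedBall] using hle)) (le_max_left _ _)
    · exact le_trans (hout z hlt) (le_max_right _ _)
  -- Liouville: g constant
  obtain ⟨a, ha⟩ := hgdiff.exists_const_forall_eq_of_bounded hbdd
  have key : ∀ z : ℂ, ψ z = a * z + ψ 0 := by
    intro z
    rcases eq_or_ne z 0 with rfl | hz0
    · simp
    · have := ha z
      rw [hg, dslope_of_ne _ hz0, slope_def_field, sub_zero] at this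
      field_simp at this
      linear_combination this
  -- |a| ≤ 1
  have ha1 : ‖a‖ ≤ 1 := by
    by_contra hcon
    push_neg at hcon
    set t : ℝ := max (R + 1) ((2 + ‖ψ 0‖) / (‖a‖ - 1)) with ht
    have htR : R < t := lt_of_lt_of_le (by linarith) (le_max_left _ _)
    have htpos : 0 < t := lt_trans hR htR
    have hzn : ‖(t:ℂ)‖ = t := by simp [abs_of_pos htpos]
    have := hRb (t:ℂ) (by rw [hzn]; exact htR)
    rw [key (t:ℂ), hzn] at this
    have hlow : ‖a‖ * t - ‖ψ 0‖ ≤ ‖a * t + ψ 0‖ := by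
      calc ‖a‖ * t - ‖ψ 0‖ = ‖a * (t:ℂ)‖ - ‖ψ 0‖ := by rw [norm_mul, hzn]
        _ ≤ ‖a * t + ψ 0‖ := by
          have := norm_le_add_norm_add (a * (t:ℂ)) (ψ 0); linarith [this]
    have hge : (2 + ‖ψ 0‖) / (‖a‖ - 1) ≤ t := le_max_right _ _
    rw [div_le_iff₀ (by linarith)] at hge
    nlinarith
  refine ⟨a, ψ 0, ha1, key, ?_⟩
  -- |a| = 1 → ψ 0 = 0
  intro hae
  by_contra hb
  have hb' : (0:ℝ) < ‖ψ 0‖ := norm_pos_iff.mpr hb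
  obtain ⟨R', hR', hRb'⟩ := h (‖ψ 0‖ / 2) (half_pos hb')
  set t : ℝ := R' + 1 with ht
  have htpos : 0 < t := by linarith
  set z : ℂ := (t : ℂ) * (starRingEnd ℂ a) * ψ 0 / (‖ψ 0‖ : ℂ) with hz
  have hzn : ‖z‖ = t := by
    have : ‖z‖ = t * ‖a‖ * ‖ψ 0‖ / ‖ψ 0‖ := by
      rw [hz, norm_div, norm_mul, norm_mul, RCLike.norm_conj, Complex.norm_real,
        Complex.norm_real, Real.norm_of_nonneg hb'.le, Real.norm_of_nonneg htpos.le]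
    rw [this, hae, mul_one, mul_div_cancel_right₀ _ (ne_of_gt hb')]
  have habs : ‖a‖ = 1 := hae
  have haa : a * starRingEnd ℂ a = 1 := by
    rw [Complex.mul_conj]
    norm_cast
    rw [Complex.normSq_eq_norm_sq, habs]; norm_num
  have haz : a * z = (t:ℂ) * ψ 0 / (‖ψ 0‖ : ℂ) := by
    have h2 : a * z = (a * starRingEnd ℂ a) * ((t:ℂ) * ψ 0 / (‖ψ 0‖:ℂ)) := by
      rw [hz]; ring
    rw [h2, haa, one_mul]
  have hval : ‖ψ z‖ = t + ‖ψ 0‖ := by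
    rw [key z, haz]
    have h3 : (t:ℂ) * ψ 0 / (‖ψ 0‖:ℂ) + ψ 0 = ((t / ‖ψ 0‖ + 1 : ℝ) : ℂ) * ψ 0 := by
      push_cast; ring
    rw [h3, norm_mul, Complex.norm_real,
      Real.norm_of_nonneg (by positivity : (0:ℝ) ≤ t / ‖ψ 0‖ + 1), add_mul,
      div_mul_cancel₀ _ (ne_of_gt hb'), one_mul]
  have := hRb' z (by rw [hzn]; linarith)
  rw [hval, hzn] at this
  linarith
end
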